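/- Let G be an n-vertex graph whose adjacency matrix A has distinct eigenvalues λ₁,…,λ_m with spectral projections E₁,…,E_m. Then for every real x such that x+1+λᵢ ≠ 0 for all i, the characteristic polynomial of the complement satisfies χ(Ḡ; x) = (−1)ⁿ χ(G; −x−1) · (1 − Σᵢ₌₁^m eᵀEᵢe/(x + 1 + λᵢ)), where e is the all-ones vector. -/

import Mathlib

open Matrix

noncomputable section

/-- The bordered matrix `[[A, b], [bᵀ, 0]]`. -/
def border {V : Type} [Fintype V] [DecidableEq V] (A : Matrix V V ℝ) (b : V → ℝ) :
    Matrix (V ⊕ Unit) (V ⊕ Unit) ℝ :=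
  Matrix.fromBlocks A (Matrix.of fun i _ => b i) (Matrix.of fun _ j => b j) 0

/-- `E 1, …, E m` are the spectral projections of the real symmetric matrix `A` associated
with its distinct eigenvalues `lam 1, …, lam m`: they are symmetric idempotents, mutually
orthogonal, summing to the identity, with `A = ∑ i, lam i • E i`, the `lam i` pairwise
distinct and each `E i` nonzero (so each `lam i` really is an eigenvalue). -/
structure SpectralDecomp {n m : ℕ} (A : Matrix (Fin n) (Fin n) ℝ) (lam : Fin m → ℝ)
    (E : Fin m → Matrix (Fin n) (Fin n) ℝ) : Prop where
  symm : ∀ i, (E i).IsSymm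
  idem : ∀ i, E i * E i = E i
  mul_eq_zero : ∀ i j, i ≠ j → E i * E j = 0
  sum_eq_one : ∑ i, E i = 1
  eq_sum : A = ∑ i, lam i • E i
  injective : Function.Injective lam
  ne_zero : ∀ i, E i ≠ 0

/-- The adjacency matrix of the complement graph: `J - I - A`. -/
def complMat {V : Type} [Fintype V] [DecidableEq V] (A : Matrix V V ℝ) : Matrix V V ℝ :=
  (Matrix.of fun _ _ => (1 : ℝ)) - 1 - A

/-- Lemma 1 (ii). For every real `x` with `x + 1 + λᵢ ≠ 0` for all `i`,
`χ(Ḡ; x) = (-1)ⁿ χ(G; -x-1) · (1 - ∑ᵢ eᵀEᵢe/(x + 1 + λᵢ))`. -/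
theorem det_compl_eq
    {n m : ℕ} (A : Matrix (Fin n) (Fin n) ℝ) (lam : Fin m → ℝ)
    (E : Fin m → Matrix (Fin n) (Fin n) ℝ)
    (hA : A.IsAdjMatrix) (hE : SpectralDecomp A lam E)
    (x : ℝ) (hx : ∀ i, x + 1 + lam i ≠ 0) :
    (x • (1 : Matrix (Fin n) (Fin n) ℝ) - complMat A).det
      = (-1) ^ n * ((-x - 1) • (1 : Matrix (Fin n) (Fin n) ℝ) - A).det
        * (1 - ∑ i, ((fun _ => (1 : ℝ)) ⬝ᵥ (E i *ᵥ fun _ => (1 : ℝ))) / (x + 1 + lam i)) := by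
    classical
  set e : Fin n → ℝ := fun _ => 1 with he
  set M : Matrix (Fin n) (Fin n) ℝ := (x + 1) • 1 + A with hM
  set N : Matrix (Fin n) (Fin n) ℝ := ∑ i, (x + 1 + lam i)⁻¹ • E i with hN
  have hMsum : M = ∑ i, (x + 1 + lam i) • E i := by
    rw [hM, hE.eq_sum]
    nth_rewrite 1 [← hE.sum_eq_one]
    rw [Finset.smul_sum, ← Finset.sum_add_distrib]
    refine Finset.sum_congr rfl fun i _ => ?_
    rw [← add_smul]
  have hMN : M * N = 1 := by
    rw [hMsum, hN, Finset.sum_mul]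
    rw [← hE.sum_eq_one]
    refine Finset.sum_congr rfl fun i _ => ?_
    rw [Matrix.mul_sum]
    rw [Finset.sum_eq_single i]
    · rw [smul_mul_smul_comm, hE.idem, mul_inv_cancel₀ (hx i), one_smul]
    · intro j _ hj
      rw [smul_mul_smul_comm, hE.mul_eq_zero i j (Ne.symm hj), smul_zero]
    · intro h; exact absurd (Finset.mem_univ i) h
  have hdetM : IsUnit M.det := by
    have : M.det ≠ 0 := by
      intro h0
      have := congrArg Matrix.det hMN
      rw [Matrix.det_mul, h0, zero_mul, Matrix.det_one] at this
      exact zero_ne_one this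
    exact isUnit_iff_ne_zero.2 this
  have hNinv : M⁻¹ = N := Matrix.inv_eq_right_inv hMN
  have hJ : (Matrix.of fun _ _ => (1 : ℝ)) = replicateCol Unit e * replicateRow Unit e := by
    ext i j; simp [Matrix.mul_apply, e]
  have key : x • (1 : Matrix (Fin n) (Fin n) ℝ) - complMat A
      = M + replicateCol Unit (-e) * replicateRow Unit e := by
    rw [complMat, hJ, hM]
    ext i j
    simp [Matrix.mul_apply, Matrix.sub_apply, Matrix.add_apply, e, Matrix.one_apply]
    split_ifs <;> ring
  rw [key, Matrix.det_add_replicateCol_mul_replicateRow hdetM, hNinv]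
  -- compute (1 + row e * N * col (-e)).det
  have hdetU : (1 + replicateRow Unit e * N * replicateCol Unit (-e)).det
      = 1 - ∑ i, ((fun _ => (1 : ℝ)) ⬝ᵥ (E i *ᵥ fun _ => (1 : ℝ))) / (x + 1 + lam i) := by
    rw [det_unique]
    have : (replicateRow Unit e * N * replicateCol Unit (-e)) default default = e ⬝ᵥ N *ᵥ (-e) := by
      rw [Matrix.mul_assoc, ← Matrix.replicateCol_mulVec, Matrix.replicateRow_mul_replicateCol_apply]
    rw [Matrix.add_apply, Matrix.one_apply_eq, this]
    rw [Matrix.mulVec_neg, dotProduct_neg, ← sub_eq_add_neg]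
    congr 1
    rw [hN]
    have hsum : (∑ i, (x + 1 + lam i)⁻¹ • E i) *ᵥ e
        = ∑ i, (x + 1 + lam i)⁻¹ • (E i *ᵥ e) := by
      ext k
      simp only [Matrix.mulVec, dotProduct, Matrix.sum_apply, Matrix.smul_apply,
        Finset.sum_apply, Pi.smul_apply, smul_eq_mul, Finset.sum_mul, Finset.mul_sum]
      rw [Finset.sum_comm]
      simp [mul_assoc]
    rw [hsum]
    simp only [dotProduct, Finset.sum_apply, Pi.smul_apply, smul_eq_mul, Finset.mul_sum]
    rw [Finset.sum_comm]
    refine Finset.sum_congr rfl fun i _ => ?_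
    rw [Finset.sum_div]
    refine Finset.sum_congr rfl fun k _ => ?_
    rw [div_eq_inv_mul]; ring
  rw [hdetU]
  have hdM : M.det = (-1) ^ n * ((-x - 1) • (1 : Matrix (Fin n) (Fin n) ℝ) - A).det := by
    have : M = (-1 : ℝ) • ((-x - 1) • (1 : Matrix (Fin n) (Fin n) ℝ) - A) := by
      rw [hM]; ext i j; simp [Matrix.one_apply]; split_ifs <;> ring
    rw [this, Matrix.det_smul]
    simp [Fintype.card_fin]
  rw [hdM]
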